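/- Let ρ and σ be quantum states on ℂ^d with supp(ρ) = supp(σ) and D(ρ‖σ) > 0. Let m ≥ 1, t₁,…,t_m ∈ [0,1] and w₁,…,w_m > 0 be such that r_m(x) := (1/ln 2)·Σ_{j=1}^m w_j f_{t_j}(x) satisfies, for all x > 0, −r_m(x) − (1/(m² ln 2))·(1/x + x − 2) ≤ −log₂ x ≤ −r_m(x). Suppose ε_V ≥ 0 and real numbers D̂₁,…,D̂_m satisfy |D̂_j − D_{f_{t_j}}(ρ‖σ)| ≤ ε_V·|D_{f_{t_j}}(ρ‖σ)| for every j, and set D̂(ρ‖σ) := −Σ_{j=1}^m (w_j/ln 2)·D̂_j. Then |D̂(ρ‖σ) − D(ρ‖σ)| / D(ρ‖σ) ≤ C·(1+ε_V)/m² + ε_V, где C := (Q₀(ρ‖σ) + Q₂(ρ‖σ)) / (D(ρ‖σ)·ln 2), Q₀(ρ‖σ) = tr[ρ⁰σ] with ρ⁰ the projection onto supp(ρ), and Q₂(ρ‖σ) = tr[ρ² σ⁺] with σ⁺ the Moore–Penrose pseudo-inverse of σ. -/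

import Mathlib

noncomputable section

namespace QRE

open scoped ComplexOrder

open Matrix

variable {d : ℕ}

/-- The rank-one projector `|u⟩⟨u|` associated with a vector `u ∈ ℂ^d`. -/
def rankOne (u : EuclideanSpace ℂ (Fin d)) : Matrix (Fin d) (Fin d) ℂ :=
  Matrix.of fun i j => u i * (starRingEnd ℂ) (u j)

/-- Functional calculus on the support of a Hermitian matrix: apply `g` to the
positive eigenvalues, and `0` to the rest. -/
def matFun (g : ℝ → ℝ) {A : Matrix (Fin d) (Fin d) ℂ} (hA : A.IsHermitian) :
    Matrix (Fin d) (Fin d) ℂ :=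
  ∑ j, (if 0 < hA.eigenvalues j then (g (hA.eigenvalues j) : ℂ) else 0) •
    rankOne (hA.eigenvectorBasis j)

/-- The orthogonal projection onto the support (column space) of a Hermitian matrix. -/
def suppProj {A : Matrix (Fin d) (Fin d) ℂ} (hA : A.IsHermitian) :
    Matrix (Fin d) (Fin d) ℂ :=
  matFun (fun _ => 1) hA

/-- The standard quantum `f`-divergence (for `supp ρ ⊆ supp σ`, where the `f(0⁺)` term
vanishes): `D_f(ρ‖σ) = Σ_{j : η_j > 0} Σ_{k : μ_k > 0} η_j f(μ_k/η_j) tr[P_j Q_k]`. -/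
def Df (f : ℝ → ℝ) {ρ σ : Matrix (Fin d) (Fin d) ℂ}
    (hρ : ρ.IsHermitian) (hσ : σ.IsHermitian) : ℝ :=
  ∑ j, ∑ k,
    if 0 < hρ.eigenvalues j ∧ 0 < hσ.eigenvalues k then
      hρ.eigenvalues j * f (hσ.eigenvalues k / hρ.eigenvalues j) *
        (Matrix.trace (rankOne (hρ.eigenvectorBasis j) *
          rankOne (hσ.eigenvectorBasis k))).re
    else 0

/-- `f_t(x) = (x-1)/(t(x-1)+1)`. -/
def ft (t x : ℝ) : ℝ := (x - 1) / (t * (x - 1) + 1)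

/-- A quantum state: positive semidefinite with unit trace. -/
def IsState (ρ : Matrix (Fin d) (Fin d) ℂ) : Prop := ρ.PosSemidef ∧ ρ.trace = 1

/-- The Umegaki relative entropy `tr[ρ (log₂ ρ − log₂ σ)]` (logs on the supports). -/
def relEnt {ρ σ : Matrix (Fin d) (Fin d) ℂ} (hρ : ρ.IsHermitian) (hσ : σ.IsHermitian) : ℝ :=
  (Matrix.trace (ρ * (matFun (Real.logb 2) hρ - matFun (Real.logb 2) hσ))).re

/-- `Q_α(ρ‖σ) = tr[ρ^α σ^{1-α}]`, matrix powers by functional calculus on the support. -/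
def Qalpha (α : ℝ) {ρ σ : Matrix (Fin d) (Fin d) ℂ}
    (hρ : ρ.IsHermitian) (hσ : σ.IsHermitian) : ℝ :=
  (Matrix.trace (matFun (fun y => y ^ α) hρ * matFun (fun y => y ^ (1 - α)) hσ)).re

/-- `Q₀(ρ‖σ) = tr[ρ⁰ σ]`. -/
def Qzero {ρ : Matrix (Fin d) (Fin d) ℂ} (hρ : ρ.IsHermitian)
    (σ : Matrix (Fin d) (Fin d) ℂ) : ℝ :=
  (Matrix.trace (suppProj hρ * σ)).re

/-- `Q₂(ρ‖σ) = tr[ρ² σ⁺]`, with `σ⁺` the Moore–Penrose pseudo-inverse of `σ`. -/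
def Qtwo (ρ : Matrix (Fin d) (Fin d) ℂ) {σ : Matrix (Fin d) (Fin d) ℂ}
    (hσ : σ.IsHermitian) : ℝ :=
  (Matrix.trace (ρ * ρ * matFun (fun y => y⁻¹) hσ)).re

section Aux

theorem trace_rankOne_mul (u v : EuclideanSpace ℂ (Fin d)) :
    Matrix.trace (rankOne u * rankOne v) = (inner ℂ u v : ℂ) * (inner ℂ v u : ℂ) := by
  simp only [Matrix.trace, Matrix.diag, Matrix.mul_apply, rankOne, Matrix.of_apply,
    PiLp.inner_apply, RCLike.inner_apply]
  rw [Finset.sum_comm, Finset.sum_mul]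
  refine Finset.sum_congr rfl fun l _ => ?_
  rw [Finset.mul_sum]
  exact Finset.sum_congr rfl fun i _ => by ring

theorem rankOne_mul_rankOne (u v : EuclideanSpace ℂ (Fin d)) :
    rankOne u * rankOne v
      = (inner ℂ u v : ℂ) • Matrix.of (fun i j => u i * (starRingEnd ℂ) (v j)) := by
  ext i j
  simp only [Matrix.mul_apply, rankOne, Matrix.of_apply, Matrix.smul_apply,
    PiLp.inner_apply, RCLike.inner_apply, smul_eq_mul, Finset.sum_mul]
  exact Finset.sum_congr rfl fun l _ => by ring

theorem spectral_sum {A : Matrix (Fin d) (Fin d) ℂ} (hA : A.IsHermitian) :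
    A = ∑ j, (hA.eigenvalues j : ℂ) • rankOne (hA.eigenvectorBasis j) := by
  nth_rewrite 1 [hA.spectral_theorem]
  ext i i'
  simp only [Unitary.conjStarAlgAut_apply, Matrix.mul_apply, Matrix.diagonal_apply, Matrix.star_apply,
    Matrix.sum_apply, Matrix.smul_apply, rankOne, Matrix.of_apply, smul_eq_mul,
    Matrix.IsHermitian.eigenvectorUnitary_apply, Function.comp_apply]
  refine Finset.sum_congr rfl fun j _ => ?_
  simp only [mul_ite, mul_zero, Finset.sum_ite_eq', Finset.mem_univ, if_true]
  exact (mul_assoc _ _ _).trans (mul_left_comm _ _ _)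

theorem trace_rankOne_eq (u v : EuclideanSpace ℂ (Fin d)) :
    Matrix.trace (rankOne u * rankOne v) = (Complex.normSq (inner ℂ u v : ℂ) : ℂ) := by
  rw [trace_rankOne_mul, ← inner_conj_symm v u, Complex.mul_conj]

theorem re_trace_rankOne_eq (u v : EuclideanSpace ℂ (Fin d)) :
    (Matrix.trace (rankOne u * rankOne v)).re = Complex.normSq (inner ℂ u v : ℂ) := by
  rw [trace_rankOne_eq]; exact Complex.ofReal_re _

theorem re_trace_rankOne_nonneg (u v : EuclideanSpace ℂ (Fin d)) :
    0 ≤ (Matrix.trace (rankOne u * rankOne v)).re := by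
  rw [re_trace_rankOne_eq]; exact Complex.normSq_nonneg _

theorem trace_rankOne (v : EuclideanSpace ℂ (Fin d)) (hv : ‖v‖ = 1) :
    Matrix.trace (rankOne v) = 1 := by
  simp only [Matrix.trace, Matrix.diag, rankOne, Matrix.of_apply]
  have : (inner ℂ v v : ℂ) = 1 := by
    rw [inner_self_eq_norm_sq_to_K, hv]; norm_num
  rw [← this, PiLp.inner_apply]
  exact Finset.sum_congr rfl fun i _ => by
    simp [RCLike.inner_apply, mul_comm, Complex.mul_conj, Complex.normSq_eq_norm_sq]

theorem trace_matFun_mul_re (g h : ℝ → ℝ) {A B : Matrix (Fin d) (Fin d) ℂ}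
    (hA : A.IsHermitian) (hB : B.IsHermitian) :
    (Matrix.trace (matFun g hA * matFun h hB)).re
      = ∑ j, ∑ k, (if 0 < hA.eigenvalues j then g (hA.eigenvalues j) else 0)
          * (if 0 < hB.eigenvalues k then h (hB.eigenvalues k) else 0)
          * (Matrix.trace (rankOne (hA.eigenvectorBasis j)
              * rankOne (hB.eigenvectorBasis k))).re := by
  rw [matFun, matFun, Finset.sum_mul]
  simp only [Finset.mul_sum, smul_mul_assoc, mul_smul_comm, smul_smul]
  rw [Matrix.trace_sum, Complex.re_sum]
  refine Finset.sum_congr rfl fun j _ => ?_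
  rw [Matrix.trace_sum, Complex.re_sum]
  refine Finset.sum_congr rfl fun k _ => ?_
  rw [Matrix.trace_smul, trace_rankOne_eq, smul_eq_mul]
  split_ifs <;>
    simp only [← Complex.ofReal_mul, Complex.ofReal_re, Complex.ofReal_zero, zero_mul, mul_zero,
      Complex.zero_re] <;> ring

theorem inner_eigenvectorBasis {A : Matrix (Fin d) (Fin d) ℂ} (hA : A.IsHermitian) (j k : Fin d) :
    (inner ℂ (hA.eigenvectorBasis j) (hA.eigenvectorBasis k) : ℂ) = if j = k then 1 else 0 :=
  orthonormal_iff_ite.mp hA.eigenvectorBasis.orthonormal j k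

theorem rankOne_basis_mul {A : Matrix (Fin d) (Fin d) ℂ} (hA : A.IsHermitian) (j k : Fin d) :
    rankOne (hA.eigenvectorBasis j) * rankOne (hA.eigenvectorBasis k)
      = if j = k then rankOne (hA.eigenvectorBasis j) else 0 := by
  rw [rankOne_mul_rankOne, inner_eigenvectorBasis]
  split_ifs with hjk
  · subst hjk; rw [one_smul]; rfl
  · rw [zero_smul]

theorem matFun_mul_matFun_self (g h : ℝ → ℝ) {A : Matrix (Fin d) (Fin d) ℂ}
    (hA : A.IsHermitian) :
    matFun g hA * matFun h hA = matFun (fun y => g y * h y) hA := by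
  rw [matFun, matFun, matFun, Finset.sum_mul]
  refine Finset.sum_congr rfl fun j _ => ?_
  rw [Finset.mul_sum]
  simp only [smul_mul_assoc, mul_smul_comm, smul_smul, rankOne_basis_mul, smul_ite, smul_zero]
  rw [Finset.sum_ite_eq Finset.univ j, if_pos (Finset.mem_univ j)]
  split_ifs with hj
  · push_cast; ring_nf
  · simp

theorem psd_eq_matFun_id {A : Matrix (Fin d) (Fin d) ℂ} (hA : A.PosSemidef) :
    A = matFun (fun y => y) hA.1 := by
  rw [matFun]
  nth_rewrite 1 [spectral_sum hA.1]
  refine Finset.sum_congr rfl fun j _ => ?_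
  split_ifs with hj
  · rfl
  · have : hA.1.eigenvalues j = 0 := le_antisymm (not_lt.mp hj) (hA.eigenvalues_nonneg j)
    rw [this]; simp

theorem sum_re_trace_right {A B : Matrix (Fin d) (Fin d) ℂ}
    (hA : A.IsHermitian) (hB : B.IsHermitian) (j : Fin d) :
    ∑ k, (Matrix.trace (rankOne (hA.eigenvectorBasis j)
        * rankOne (hB.eigenvectorBasis k))).re = 1 := by
  have h := hB.eigenvectorBasis.sum_inner_mul_inner (hA.eigenvectorBasis j)
    (hA.eigenvectorBasis j)
  have h2 : (inner ℂ (hA.eigenvectorBasis j) (hA.eigenvectorBasis j) : ℂ) = 1 := by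
    rw [inner_eigenvectorBasis]; simp
  rw [h2] at h
  calc ∑ k, (Matrix.trace (rankOne (hA.eigenvectorBasis j)
        * rankOne (hB.eigenvectorBasis k))).re
      = (∑ k, (inner ℂ (hA.eigenvectorBasis j) (hB.eigenvectorBasis k) : ℂ)
          * (inner ℂ (hB.eigenvectorBasis k) (hA.eigenvectorBasis j) : ℂ)).re := by
        rw [Complex.re_sum]
        exact Finset.sum_congr rfl fun k _ => by rw [trace_rankOne_mul]
    _ = 1 := by rw [h]; rfl

theorem re_trace_rankOne_symm (u v : EuclideanSpace ℂ (Fin d)) :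
    (Matrix.trace (rankOne u * rankOne v)).re
      = (Matrix.trace (rankOne v * rankOne u)).re := by
  rw [re_trace_rankOne_eq, re_trace_rankOne_eq, ← inner_conj_symm v u, Complex.normSq_conj]

theorem sum_re_trace_left {A B : Matrix (Fin d) (Fin d) ℂ}
    (hA : A.IsHermitian) (hB : B.IsHermitian) (k : Fin d) :
    ∑ j, (Matrix.trace (rankOne (hA.eigenvectorBasis j)
        * rankOne (hB.eigenvectorBasis k))).re = 1 := by
  rw [Finset.sum_congr rfl fun j _ => re_trace_rankOne_symm (hA.eigenvectorBasis j)
    (hB.eigenvectorBasis k)]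
  exact sum_re_trace_right hB hA k

theorem eig_mem_range {A : Matrix (Fin d) (Fin d) ℂ} (hA : A.IsHermitian) (j : Fin d)
    (hj : hA.eigenvalues j ≠ 0) :
    ⇑(hA.eigenvectorBasis j) ∈ LinearMap.range A.mulVecLin := by
  refine ⟨((hA.eigenvalues j : ℂ))⁻¹ • ⇑(hA.eigenvectorBasis j), ?_⟩
  rw [Matrix.mulVecLin_apply, Matrix.mulVec_smul, hA.mulVec_eigenvectorBasis]
  ext i
  simp only [Pi.smul_apply, smul_eq_mul, Complex.real_smul]
  rw [← mul_assoc, inv_mul_cancel₀ (by exact_mod_cast hj), one_mul]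

theorem inner_eig_zero {B : Matrix (Fin d) (Fin d) ℂ} (hB : B.IsHermitian) (k : Fin d)
    (hk : hB.eigenvalues k = 0) (v : EuclideanSpace ℂ (Fin d))
    (hv : ⇑v ∈ LinearMap.range B.mulVecLin) :
    (inner ℂ (hB.eigenvectorBasis k) v : ℂ) = 0 := by
  obtain ⟨w, hw⟩ := hv
  have hBu : B *ᵥ ⇑(hB.eigenvectorBasis k) = 0 := by
    rw [hB.mulVec_eigenvectorBasis, hk]; ext i; simp
  have hrow : star ⇑(hB.eigenvectorBasis k) ᵥ* B = 0 := by
    have := Matrix.star_mulVec (M := B) (v := ⇑(hB.eigenvectorBasis k))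
    rw [hBu, hB.eq] at this
    simpa using this.symm
  rw [EuclideanSpace.inner_eq_star_dotProduct]
  have hv' : v.ofLp = B *ᵥ w := by
    rw [← hw]; rfl
  rw [hv', dotProduct_comm, Matrix.dotProduct_mulVec]
  have : (star <| (WithLp.equiv 2 (Fin d → ℂ)) (hB.eigenvectorBasis k)) ᵥ* B = 0 := hrow
  rw [hrow, zero_dotProduct]

theorem re_trace_zero_of_supp {A B : Matrix (Fin d) (Fin d) ℂ}
    (hA : A.IsHermitian) (hB : B.IsHermitian)
    (hAB : LinearMap.range A.mulVecLin = LinearMap.range B.mulVecLin)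
    {j k : Fin d} (hj : hA.eigenvalues j ≠ 0) (hk : hB.eigenvalues k = 0) :
    (Matrix.trace (rankOne (hA.eigenvectorBasis j) * rankOne (hB.eigenvectorBasis k))).re
      = 0 := by
  rw [re_trace_rankOne_symm, re_trace_rankOne_eq]
  rw [inner_eig_zero hB k hk _ (hAB ▸ eig_mem_range hA j hj)]
  simp

theorem re_trace_zero_of_supp' {A B : Matrix (Fin d) (Fin d) ℂ}
    (hA : A.IsHermitian) (hB : B.IsHermitian)
    (hAB : LinearMap.range A.mulVecLin = LinearMap.range B.mulVecLin)
    {j k : Fin d} (hj : hA.eigenvalues j = 0) (hk : hB.eigenvalues k ≠ 0) :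
    (Matrix.trace (rankOne (hA.eigenvectorBasis j) * rankOne (hB.eigenvectorBasis k))).re
      = 0 := by
  rw [re_trace_rankOne_eq]
  rw [inner_eig_zero hA j hj _ (hAB.symm ▸ eig_mem_range hB k hk)]
  simp

/-- restricted Parseval over `k` with positive eigenvalues -/
theorem sum_ite_re_trace_right {A B : Matrix (Fin d) (Fin d) ℂ}
    (hA : A.PosSemidef) (hB : B.PosSemidef)
    (hAB : LinearMap.range A.mulVecLin = LinearMap.range B.mulVecLin)
    {j : Fin d} (hj : 0 < hA.1.eigenvalues j) :
    ∑ k, (if 0 < hB.1.eigenvalues k then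
      (Matrix.trace (rankOne (hA.1.eigenvectorBasis j)
        * rankOne (hB.1.eigenvectorBasis k))).re else 0) = 1 := by
  rw [← sum_re_trace_right hA.1 hB.1 j]
  refine Finset.sum_congr rfl fun k _ => ?_
  split_ifs with hk
  · rfl
  · exact (re_trace_zero_of_supp hA.1 hB.1 hAB hj.ne'
      (le_antisymm (not_lt.mp hk) (hB.eigenvalues_nonneg k))).symm

theorem sum_ite_re_trace_left {A B : Matrix (Fin d) (Fin d) ℂ}
    (hA : A.PosSemidef) (hB : B.PosSemidef)
    (hAB : LinearMap.range A.mulVecLin = LinearMap.range B.mulVecLin)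
    {k : Fin d} (hk : 0 < hB.1.eigenvalues k) :
    ∑ j, (if 0 < hA.1.eigenvalues j then
      (Matrix.trace (rankOne (hA.1.eigenvectorBasis j)
        * rankOne (hB.1.eigenvectorBasis k))).re else 0) = 1 := by
  rw [← sum_re_trace_left hA.1 hB.1 k]
  refine Finset.sum_congr rfl fun j _ => ?_
  split_ifs with hj
  · rfl
  · exact (re_trace_zero_of_supp' hA.1 hB.1 hAB
      (le_antisymm (not_lt.mp hj) (hA.eigenvalues_nonneg j)) hk.ne').symm

theorem re_trace_eq_sum_eigenvalues {A : Matrix (Fin d) (Fin d) ℂ} (hA : A.IsHermitian) :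
    (Matrix.trace A).re = ∑ j, hA.eigenvalues j := by
  nth_rewrite 1 [spectral_sum hA]
  rw [Matrix.trace_sum, Complex.re_sum]
  refine Finset.sum_congr rfl fun j _ => ?_
  rw [Matrix.trace_smul, trace_rankOne _ (hA.eigenvectorBasis.orthonormal.1 j), smul_eq_mul,
    mul_one, Complex.ofReal_re]

end Aux

set_option maxHeartbeats 1000000 in
/-- Error bound for estimating the quantum relative entropy (Proposition 1):
`|D̂(ρ‖σ) − D(ρ‖σ)|/D(ρ‖σ) ≤ C (1+ε_V)/m² + ε_V` with
`C = (Q₀(ρ‖σ) + Q₂(ρ‖σ))/(D(ρ‖σ) ln 2)`. -/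
theorem error_bound_relEnt (ρ σ : Matrix (Fin d) (Fin d) ℂ)
    (hρ : IsState ρ) (hσ : IsState σ)
    (hsupp : LinearMap.range ρ.mulVecLin = LinearMap.range σ.mulVecLin)
    (hD : 0 < relEnt hρ.1.1 hσ.1.1)
    (m : ℕ) (hm : 1 ≤ m) (t w : Fin m → ℝ)
    (ht : ∀ j, t j ∈ Set.Icc (0 : ℝ) 1) (hw : ∀ j, 0 < w j)
    (happrox : ∀ x > (0 : ℝ),
      -((1 / Real.log 2) * ∑ j, w j * ft (t j) x) -
          (1 / ((m : ℝ) ^ 2 * Real.log 2)) * (1 / x + x - 2) ≤ -Real.logb 2 x ∧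
        -Real.logb 2 x ≤ -((1 / Real.log 2) * ∑ j, w j * ft (t j) x))
    (εV : ℝ) (hεV : 0 ≤ εV) (Dhat : Fin m → ℝ)
    (hest : ∀ j, |Dhat j - Df (ft (t j)) hρ.1.1 hσ.1.1| ≤
      εV * |Df (ft (t j)) hρ.1.1 hσ.1.1|) :
    |(-∑ j, (w j / Real.log 2) * Dhat j) - relEnt hρ.1.1 hσ.1.1| /
        relEnt hρ.1.1 hσ.1.1 ≤
      ((Qzero hρ.1.1 σ + Qtwo ρ hσ.1.1) / (relEnt hρ.1.1 hσ.1.1 * Real.log 2)) *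
          (1 + εV) / (m : ℝ) ^ 2 + εV := by
  classical
  have hρH : ρ.IsHermitian := hρ.1.1
  have hσH : σ.IsHermitian := hσ.1.1
  set L := Real.log 2 with hLdef
  have hL : 0 < L := Real.log_pos one_lt_two
  have hm2 : (0:ℝ) < (m:ℝ)^2 := by
    have : (1:ℝ) ≤ (m:ℝ) := by exact_mod_cast hm
    positivity
  set η := hρ.1.1.eigenvalues with hηdef
  set μ := hσ.1.1.eigenvalues with hμdef
  set T : Fin d → Fin d → ℝ := fun j k =>
    (Matrix.trace (rankOne (hρ.1.1.eigenvectorBasis j)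
      * rankOne (hσ.1.1.eigenvectorBasis k))).re with hTdef
  set W : Fin d → Fin d → ℝ := fun j k =>
    if 0 < η j ∧ 0 < μ k then η j * T j k else 0 with hWdef
  set X : Fin d → Fin d → ℝ := fun j k => μ k / η j with hXdef
  have hT0 : ∀ j k, 0 ≤ T j k := fun j k => re_trace_rankOne_nonneg _ _
  have hW0 : ∀ j k, 0 ≤ W j k := by
    intro j k
    simp only [hWdef]
    split_ifs with h
    · exact mul_nonneg h.1.le (hT0 j k)
    · exact le_refl 0
  have hX0 : ∀ j k, (0 < η j ∧ 0 < μ k) → 0 < X j k := fun j k h => div_pos h.2 h.1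
  have hη0 : ∀ j, 0 ≤ η j := fun j => hρ.1.eigenvalues_nonneg j
  have hμ0 : ∀ k, 0 ≤ μ k := fun k => hσ.1.eigenvalues_nonneg k
  -- identities
  have hDf : ∀ i, Df (ft (t i)) hρ.1.1 hσ.1.1 = ∑ j, ∑ k, W j k * ft (t i) (X j k) := by
    intro i
    unfold Df
    simp only [hWdef, hXdef, hTdef, hηdef, hμdef]
    refine Finset.sum_congr rfl fun j _ => Finset.sum_congr rfl fun k _ => ?_
    split_ifs with h
    · ring
    · rw [zero_mul]
  have hρm : ρ = matFun (fun y => y) hρ.1.1 := psd_eq_matFun_id hρ.1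
  have hsame : ∀ j k, (Matrix.trace (rankOne (hρ.1.1.eigenvectorBasis j)
      * rankOne (hρ.1.1.eigenvectorBasis k))).re = if j = k then 1 else 0 := by
    intro j k
    rw [re_trace_rankOne_eq, inner_eigenvectorBasis]
    split_ifs <;> simp
  have hRel : relEnt hρ.1.1 hσ.1.1
      = ∑ j, ∑ k, W j k * (Real.logb 2 (η j) - Real.logb 2 (μ k)) := by
    unfold relEnt
    rw [Matrix.mul_sub, Matrix.trace_sub, Complex.sub_re]
    have e1 : (Matrix.trace (ρ * matFun (Real.logb 2) hρ.1.1)).re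
        = ∑ j, ∑ k, W j k * Real.logb 2 (η j) := by
      nth_rewrite 1 [hρm]
      rw [trace_matFun_mul_re]
      refine Finset.sum_congr rfl fun j _ => ?_
      simp only [hsame, mul_ite, mul_one, mul_zero]
      rw [Finset.sum_ite_eq Finset.univ j, if_pos (Finset.mem_univ j)]
      by_cases hj : 0 < η j
      · have hsum : ∑ k, (if 0 < μ k then T j k else 0) = 1 :=
          sum_ite_re_trace_right hρ.1 hσ.1 hsupp hj
        rw [if_pos hj, if_pos hj]
        calc η j * Real.logb 2 (η j)
            = (η j * Real.logb 2 (η j)) * ∑ k, (if 0 < μ k then T j k else 0) := by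
              rw [hsum, mul_one]
          _ = ∑ k, W j k * Real.logb 2 (η j) := by
              rw [Finset.mul_sum]
              refine Finset.sum_congr rfl fun k _ => ?_
              simp only [hWdef]
              by_cases hk : 0 < μ k
              · rw [if_pos hk, if_pos (And.intro hj hk)]; ring
              · rw [if_neg hk, if_neg (fun hc => hk hc.2), mul_zero, zero_mul]
      · rw [if_neg hj]
        symm
        refine Finset.sum_eq_zero fun k _ => ?_
        simp only [hWdef]
        rw [if_neg (fun hc => hj hc.1), zero_mul]
    have e3 : (Matrix.trace (ρ * matFun (Real.logb 2) hσ.1.1)).re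
        = ∑ j, ∑ k, W j k * Real.logb 2 (μ k) := by
      nth_rewrite 1 [hρm]
      rw [trace_matFun_mul_re]
      refine Finset.sum_congr rfl fun j _ => Finset.sum_congr rfl fun k _ => ?_
      simp only [hWdef, hTdef, hηdef, hμdef]
      by_cases h : 0 < hρ.1.1.eigenvalues j ∧ 0 < hσ.1.1.eigenvalues k
      · rw [if_pos h.1, if_pos h.2, if_pos h]; ring
      · rcases not_and_or.mp h with h1 | h1
        · rw [if_neg h1, if_neg h, zero_mul, zero_mul, zero_mul]
        · rw [if_neg h1, if_neg h, mul_zero, zero_mul, zero_mul]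
    rw [e1, e3, ← Finset.sum_sub_distrib]
    refine Finset.sum_congr rfl fun j _ => ?_
    rw [← Finset.sum_sub_distrib]
    refine Finset.sum_congr rfl fun k _ => by ring
  have hQ0 : Qzero hρ.1.1 σ = ∑ j, ∑ k, W j k * X j k := by
    unfold Qzero suppProj
    nth_rewrite 1 [psd_eq_matFun_id hσ.1]
    rw [trace_matFun_mul_re]
    refine Finset.sum_congr rfl fun j _ => Finset.sum_congr rfl fun k _ => ?_
    simp only [hWdef, hXdef, hTdef, hηdef, hμdef]
    by_cases h : 0 < hρ.1.1.eigenvalues j ∧ 0 < hσ.1.1.eigenvalues k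
    · rw [if_pos h.1, if_pos h.2, if_pos h]
      have hne : hρ.1.1.eigenvalues j ≠ 0 := h.1.ne'
      field_simp
    · rcases not_and_or.mp h with h1 | h1
      · rw [if_neg h1, if_neg h, zero_mul, zero_mul, zero_mul]
      · rw [if_neg h1, if_neg h, mul_zero, zero_mul, zero_mul]
  have hQ2 : Qtwo ρ hσ.1.1 = ∑ j, ∑ k, W j k * (X j k)⁻¹ := by
    unfold Qtwo
    have hsq : ρ * ρ = matFun (fun y => y * y) hρ.1.1 := by
      conv_lhs => rw [hρm]
      rw [matFun_mul_matFun_self]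
    rw [hsq, trace_matFun_mul_re]
    refine Finset.sum_congr rfl fun j _ => Finset.sum_congr rfl fun k _ => ?_
    simp only [hWdef, hXdef, hTdef, hηdef, hμdef]
    by_cases h : 0 < hρ.1.1.eigenvalues j ∧ 0 < hσ.1.1.eigenvalues k
    · rw [if_pos h.1, if_pos h.2, if_pos h]
      have hne : hρ.1.1.eigenvalues j ≠ 0 := h.1.ne'
      have hne2 : hσ.1.1.eigenvalues k ≠ 0 := h.2.ne'
      field_simp
    · rcases not_and_or.mp h with h1 | h1
      · rw [if_neg h1, if_neg h, zero_mul, zero_mul, zero_mul]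
      · rw [if_neg h1, if_neg h, mul_zero, zero_mul, zero_mul]
  have hW1 : ∑ j, ∑ k, W j k = 1 := by
    have e1 : ∀ j, ∑ k, W j k = if 0 < η j then η j else 0 := by
      intro j
      by_cases hj : 0 < η j
      · rw [if_pos hj]
        have hsum : ∑ k, (if 0 < μ k then T j k else 0) = 1 :=
          sum_ite_re_trace_right hρ.1 hσ.1 hsupp hj
        calc ∑ k, W j k = ∑ k, η j * (if 0 < μ k then T j k else 0) := by
              refine Finset.sum_congr rfl fun k _ => ?_
              simp only [hWdef]
              by_cases hk : 0 < μ k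
              · rw [if_pos (And.intro hj hk), if_pos hk]
              · rw [if_neg (fun hc => hk hc.2), if_neg hk, mul_zero]
          _ = η j := by rw [← Finset.mul_sum, hsum, mul_one]
      · rw [if_neg hj]
        refine Finset.sum_eq_zero fun k _ => ?_
        simp only [hWdef]
        rw [if_neg (fun hc => hj hc.1)]
    rw [Finset.sum_congr rfl fun j _ => e1 j]
    have e2 : ∑ j, (if 0 < η j then η j else 0) = ∑ j, η j := by
      refine Finset.sum_congr rfl fun j _ => ?_
      split_ifs with hj
      · rfl
      · exact (le_antisymm (not_lt.mp hj) (hη0 j)).symm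
    rw [e2]
    simp only [hηdef]
    rw [← re_trace_eq_sum_eigenvalues hρ.1.1, hρ.2, Complex.one_re]
  have hQ01 : ∑ j, ∑ k, W j k * X j k = 1 := by
    have e1 : ∀ j k, W j k * X j k
        = if 0 < μ k then μ k * (if 0 < η j then T j k else 0) else 0 := by
      intro j k
      simp only [hWdef, hXdef]
      by_cases h : 0 < η j ∧ 0 < μ k
      · rw [if_pos h, if_pos h.2, if_pos h.1]
        have hne : η j ≠ 0 := h.1.ne'
        field_simp
      · rcases not_and_or.mp h with h1 | h1
        · rw [if_neg h]
          by_cases hk : 0 < μ k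
          · rw [if_pos hk, if_neg h1, mul_zero, zero_mul]
          · rw [if_neg hk, zero_mul]
        · rw [if_neg h, if_neg h1, zero_mul]
    rw [Finset.sum_congr rfl fun j (_ : j ∈ Finset.univ) =>
      Finset.sum_congr rfl fun k (_ : k ∈ Finset.univ) => e1 j k]
    rw [Finset.sum_comm]
    have e2 : ∀ k, (∑ j, if 0 < μ k then μ k * (if 0 < η j then T j k else 0) else 0)
        = if 0 < μ k then μ k else 0 := by
      intro k
      by_cases hk : 0 < μ k
      · simp only [if_pos hk]
        rw [← Finset.mul_sum, sum_ite_re_trace_left hρ.1 hσ.1 hsupp hk, mul_one]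
      · simp only [if_neg hk, Finset.sum_const_zero]
    rw [Finset.sum_congr rfl fun k _ => e2 k]
    have e3 : ∑ k, (if 0 < μ k then μ k else 0) = ∑ k, μ k := by
      refine Finset.sum_congr rfl fun k _ => ?_
      split_ifs with hk
      · rfl
      · exact (le_antisymm (not_lt.mp hk) (hμ0 k)).symm
    rw [e3]
    simp only [hμdef]
    rw [← re_trace_eq_sum_eigenvalues hσ.1.1, hσ.2, Complex.one_re]
  -- real analysis part
  set D := relEnt hρ.1.1 hσ.1.1
  set Q0 := Qzero hρ.1.1 σ
  set Q2 := Qtwo ρ hσ.1.1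
  have hDX : D = ∑ j, ∑ k, W j k * (- Real.logb 2 (X j k)) := by
    rw [hRel]
    refine Finset.sum_congr rfl fun j _ => Finset.sum_congr rfl fun k _ => ?_
    rcases eq_or_ne (W j k) 0 with h | h
    · rw [h, zero_mul, zero_mul]
    · have hc : 0 < η j ∧ 0 < μ k := by
        by_contra hc; exact h (by simp only [hWdef]; rw [if_neg hc])
      congr 1
      rw [hXdef]
      rw [Real.logb_div hc.2.ne' hc.1.ne']
      ring
  set M : ℝ := ∑ j, ∑ k, W j k * ((1 / L) * ∑ i, w i * ft (t i) (X j k)) with hMdef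
  have h1 : D ≤ -M := by
    rw [hDX, hMdef, ← Finset.sum_neg_distrib]
    refine Finset.sum_le_sum fun j _ => ?_
    rw [← Finset.sum_neg_distrib]
    refine Finset.sum_le_sum fun k _ => ?_
    rcases eq_or_ne (W j k) 0 with h | h
    · rw [h]; simp
    · have hc : 0 < η j ∧ 0 < μ k := by
        by_contra hc; exact h (by simp only [hWdef]; rw [if_neg hc])
      have h' := (happrox (X j k) (hX0 j k hc)).2
      calc W j k * -Real.logb 2 (X j k)
          ≤ W j k * -(1 / L * ∑ i, w i * ft (t i) (X j k)) :=
            mul_le_mul_of_nonneg_left h' (hW0 j k)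
        _ = -(W j k * (1 / L * ∑ i, w i * ft (t i) (X j k))) := by ring
  set E0 : ℝ := ∑ j, ∑ k, W j k * (1 / X j k + X j k - 2) with hE0def
  have h2 : -M ≤ D + (1 / ((m:ℝ)^2 * L)) * E0 := by
    rw [hDX, hMdef, hE0def, Finset.mul_sum, ← Finset.sum_add_distrib, ← Finset.sum_neg_distrib]
    refine Finset.sum_le_sum fun j _ => ?_
    rw [Finset.mul_sum, ← Finset.sum_add_distrib, ← Finset.sum_neg_distrib]
    refine Finset.sum_le_sum fun k _ => ?_
    rcases eq_or_ne (W j k) 0 with h | h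
    · rw [h]; simp
    · have hc : 0 < η j ∧ 0 < μ k := by
        by_contra hc; exact h (by simp only [hWdef]; rw [if_neg hc])
      have happ := (happrox (X j k) (hX0 j k hc)).1
      have : -((1 / L) * ∑ i, w i * ft (t i) (X j k))
          ≤ -Real.logb 2 (X j k) + (1 / ((m:ℝ)^2 * L)) * (1 / X j k + X j k - 2) := by
        linarith [happ]
      calc -(W j k * ((1 / L) * ∑ i, w i * ft (t i) (X j k)))
          = W j k * (-((1 / L) * ∑ i, w i * ft (t i) (X j k))) := by ring
        _ ≤ W j k * (-Real.logb 2 (X j k)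
              + (1 / ((m:ℝ)^2 * L)) * (1 / X j k + X j k - 2)) :=
            mul_le_mul_of_nonneg_left this (hW0 j k)
        _ = W j k * -Real.logb 2 (X j k)
              + 1 / ((m:ℝ)^2 * L) * (W j k * (1 / X j k + X j k - 2)) := by ring
  have h3 : E0 ≤ Q2 + Q0 := by
    rw [hE0def, hQ2, hQ0, ← Finset.sum_add_distrib]
    refine Finset.sum_le_sum fun j _ => ?_
    rw [← Finset.sum_add_distrib]
    refine Finset.sum_le_sum fun k _ => ?_
    have h1x : W j k * (1 / X j k + X j k - 2) ≤ W j k * (1 / X j k + X j k) := by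
      apply mul_le_mul_of_nonneg_left _ (hW0 j k)
      linarith
    calc W j k * (1 / X j k + X j k - 2) ≤ W j k * (1 / X j k + X j k) := h1x
      _ = W j k * (X j k)⁻¹ + W j k * X j k := by rw [one_div]; ring
  have h4 : M = ∑ i, (w i / L) * Df (ft (t i)) hρ.1.1 hσ.1.1 := by
    have e1 : M = ∑ j, ∑ k, ∑ i, (w i / L) * (W j k * ft (t i) (X j k)) := by
      rw [hMdef]
      refine Finset.sum_congr rfl fun j _ => Finset.sum_congr rfl fun k _ => ?_
      rw [Finset.mul_sum, Finset.mul_sum]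
      refine Finset.sum_congr rfl fun i _ => by ring
    rw [e1, Finset.sum_congr rfl fun j (_ : j ∈ Finset.univ) =>
        (Finset.sum_comm : (∑ k, ∑ i, (w i / L) * (W j k * ft (t i) (X j k)))
          = ∑ i, ∑ k, (w i / L) * (W j k * ft (t i) (X j k))),
      Finset.sum_comm]
    refine Finset.sum_congr rfl fun i _ => ?_
    simp_rw [hDf i, Finset.mul_sum]
  have h5 : ∀ i, Df (ft (t i)) hρ.1.1 hσ.1.1 ≤ 0 := by
    intro i
    rw [hDf i]
    have : ∑ j, ∑ k, W j k * ft (t i) (X j k) ≤ ∑ j, ∑ k, W j k * (X j k - 1) := by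
      refine Finset.sum_le_sum fun j _ => Finset.sum_le_sum fun k _ => ?_
      rcases eq_or_ne (W j k) 0 with h | h
      · rw [h, zero_mul, zero_mul]
      · have hc : 0 < η j ∧ 0 < μ k := by
          by_contra hc; exact h (by simp only [hWdef]; rw [if_neg hc])
        refine mul_le_mul_of_nonneg_left ?_ (hW0 j k)
        -- ft t x ≤ x - 1
        have hx := hX0 j k hc
        have hti := ht i
        have hden : 0 < t i * (X j k - 1) + 1 := by
          rcases eq_or_lt_of_le hti.1 with h0 | h0
          · rw [← h0]; norm_num
          · nlinarith [hti.2, hx]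
        rw [ft, div_le_iff₀ hden]
        nlinarith [sq_nonneg (X j k - 1), hti.1]
    calc ∑ j, ∑ k, W j k * ft (t i) (X j k) ≤ ∑ j, ∑ k, W j k * (X j k - 1) := this
      _ = (∑ j, ∑ k, W j k * X j k) - ∑ j, ∑ k, W j k := by
          rw [← Finset.sum_sub_distrib]
          exact Finset.sum_congr rfl fun j _ => by
            rw [← Finset.sum_sub_distrib]
            exact Finset.sum_congr rfl fun k _ => by ring
      _ = 0 := by rw [hQ01, hW1]; ring
  set S := -∑ i, (w i / L) * Df (ft (t i)) hρ.1.1 hσ.1.1 with hSdef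
  have hMS : -M = S := by rw [hSdef, h4]
  set E := (Q0 + Q2) / ((m:ℝ)^2 * L) with hEdef
  have hQ0nn : 0 ≤ Q0 := by
    rw [hQ0]
    refine Finset.sum_nonneg fun j _ => Finset.sum_nonneg fun k _ => ?_
    exact mul_nonneg (hW0 j k) (div_nonneg (hμ0 k) (hη0 j))
  have hQ2nn : 0 ≤ Q2 := by
    rw [hQ2]
    refine Finset.sum_nonneg fun j _ => Finset.sum_nonneg fun k _ => ?_
    exact mul_nonneg (hW0 j k) (inv_nonneg.mpr (div_nonneg (hμ0 k) (hη0 j)))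
  have hE : 0 ≤ E := by
    rw [hEdef]
    have := hm2
    positivity
  have hSD : D ≤ S := hMS ▸ h1
  have hSDE : S ≤ D + E := by
    rw [← hMS, hEdef]
    calc -M ≤ D + (1 / ((m:ℝ)^2 * L)) * E0 := h2
      _ ≤ D + (1 / ((m:ℝ)^2 * L)) * (Q2 + Q0) := by
          have : 0 ≤ 1 / ((m:ℝ)^2 * L) := by positivity
          nlinarith [h3]
      _ = D + (Q0 + Q2) / ((m:ℝ)^2 * L) := by ring
  have h6 : |(-∑ i, (w i / L) * Dhat i) - S| ≤ εV * S := by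
    have : (-∑ i, (w i / L) * Dhat i) - S
        = -∑ i, (w i / L) * (Dhat i - Df (ft (t i)) hρ.1.1 hσ.1.1) := by
      rw [hSdef, sub_neg_eq_add, ← Finset.sum_neg_distrib, ← Finset.sum_add_distrib,
        ← Finset.sum_neg_distrib]
      refine Finset.sum_congr rfl fun i _ => by ring
    rw [this, abs_neg]
    calc |∑ i, (w i / L) * (Dhat i - Df (ft (t i)) hρ.1.1 hσ.1.1)|
        ≤ ∑ i, |(w i / L) * (Dhat i - Df (ft (t i)) hρ.1.1 hσ.1.1)| :=
          Finset.abs_sum_le_sum_abs _ _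
      _ ≤ εV * S := by
          rw [hSdef, ← Finset.sum_neg_distrib, Finset.mul_sum]
          refine Finset.sum_le_sum fun i _ => ?_
          have hwL : 0 ≤ w i / L := le_of_lt (div_pos (hw i) hL)
          rw [abs_mul, abs_of_nonneg hwL]
          have := hest i
          have habs : |Df (ft (t i)) hρ.1.1 hσ.1.1| = -(Df (ft (t i)) hρ.1.1 hσ.1.1) :=
            abs_of_nonpos (h5 i)
          calc w i / L * |Dhat i - Df (ft (t i)) hρ.1.1 hσ.1.1|
              ≤ w i / L * (εV * |Df (ft (t i)) hρ.1.1 hσ.1.1|) :=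
                mul_le_mul_of_nonneg_left (hest i) hwL
            _ = εV * -(w i / L * Df (ft (t i)) hρ.1.1 hσ.1.1) := by rw [habs]; ring
  have hmain : |(-∑ i, (w i / L) * Dhat i) - D| ≤ εV * (D + E) + E := by
    calc |(-∑ i, (w i / L) * Dhat i) - D|
        ≤ |(-∑ i, (w i / L) * Dhat i) - S| + |S - D| := abs_sub_le _ _ _
      _ ≤ εV * S + (S - D) := by
          have h8 : (0:ℝ) ≤ S - D := by linarith
          rw [abs_of_nonneg h8]
          exact add_le_add h6 le_rfl
      _ ≤ εV * (D + E) + E := by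
          have h7 : εV * S ≤ εV * (D + E) := mul_le_mul_of_nonneg_left hSDE hεV
          linarith
  have hfinal : (εV * (D + E) + E) / D
      = ((Q0 + Q2) / (D * L)) * (1 + εV) / (m:ℝ)^2 + εV := by
    rw [hEdef]
    field_simp
    ring
  calc |(-∑ i, (w i / L) * Dhat i) - D| / D ≤ (εV * (D + E) + E) / D := by
        gcongr
    _ = ((Q0 + Q2) / (D * L)) * (1 + εV) / (m:ℝ)^2 + εV := hfinal


end QRE
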